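/- If x = (x₀,…,x_ℓ) ∈ ℂ^{ℓ+1} satisfies 4i(ℓ+1-i)x_{i-1} = (μ_k - μ_i)x_i for all 1 ≤ i ≤ ℓ (the eigenvector equations for L(p) with eigenvalue μ_k), and if k is the largest index with this eigenvalue, then x_i = 0 for 0 ≤ i < k, and x is determined by x_k; moreover the vector v_k with v_{i,k}=0 for i<k, v_{k,k}=1, and v_{k+j,k} = ∏_{i=1}^{j} ((k+i)(ℓ+1-i-k))/(i(ℓ+1-2p-2k-i)) for 1 ≤ j ≤ ℓ-k satisfies these equations, provided ℓ+1-2p-2k-i ≠ 0 for 1 ≤ i ≤ ℓ-k. -/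

import Mathlib

/-- Eigenvectors of `L(p)` with eigenvalue `μ_k`: any solution `x` of the
recursion `4i(ℓ+1-i)x_{i-1} = (μ_k - μ_i)x_i` (for `1 ≤ i ≤ ℓ`) vanishes below
`k` and is determined by `x_k`, being a multiple of the explicit vector `v_k`,
which itself solves the recursion. -/
theorem stmt3 (ℓ k : ℕ) (p : ℂ) (hk : k ≤ ℓ)
    (μ : ℕ → ℂ)
    (hμ : ∀ m : ℕ, μ m = -4 * p * ((ℓ : ℂ) - 2 * (m : ℂ)) - 4 * (m : ℂ) * ((ℓ : ℂ) - (m : ℂ) + 1))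
    (hmax : ∀ k' : ℕ, k' ≤ ℓ → μ k' = μ k → k' ≤ k)
    (hden : ∀ i : ℕ, 1 ≤ i → i ≤ ℓ - k → (ℓ : ℂ) + 1 - 2 * p - 2 * (k : ℂ) - (i : ℂ) ≠ 0)
    (v : ℕ → ℂ)
    (hv : ∀ i : ℕ, v i = if i < k then 0 else
      ∏ m ∈ Finset.range (i - k),
        (((k : ℂ) + (m : ℂ) + 1) * ((ℓ : ℂ) + 1 - ((m : ℂ) + 1) - (k : ℂ))) /
          (((m : ℂ) + 1) * ((ℓ : ℂ) + 1 - 2 * p - 2 * (k : ℂ) - ((m : ℂ) + 1)))) :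
    (∀ x : ℕ → ℂ,
      (∀ i : ℕ, 1 ≤ i → i ≤ ℓ →
        4 * (i : ℂ) * ((ℓ : ℂ) + 1 - (i : ℂ)) * x (i - 1) = (μ k - μ i) * x i) →
      (∀ i : ℕ, i < k → x i = 0) ∧ (∀ i : ℕ, i ≤ ℓ → x i = x k * v i)) ∧
    (∀ i : ℕ, 1 ≤ i → i ≤ ℓ →
      4 * (i : ℂ) * ((ℓ : ℂ) + 1 - (i : ℂ)) * v (i - 1) = (μ k - μ i) * v i) := by
  have key : ∀ i : ℕ, μ k - μ i
      = 4 * ((i : ℂ) - (k : ℂ)) * ((ℓ : ℂ) + 1 - 2 * p - (k : ℂ) - (i : ℂ)) := by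
    intro i; rw [hμ k, hμ i]; ring
  have hvk : v k = 1 := by rw [hv k]; simp
  have hvlt : ∀ i, i < k → v i = 0 := fun i hi => by rw [hv i, if_pos hi]
  have hvstep : ∀ j : ℕ,
      v (k + j + 1) = v (k + j) *
        ((((k : ℂ) + (j : ℂ) + 1) * ((ℓ : ℂ) + 1 - ((j : ℂ) + 1) - (k : ℂ))) /
          (((j : ℂ) + 1) * ((ℓ : ℂ) + 1 - 2 * p - 2 * (k : ℂ) - ((j : ℂ) + 1)))) := by
    intro j
    rw [hv (k + j + 1), hv (k + j), if_neg (by omega), if_neg (by omega)]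
    have h1 : k + j + 1 - k = j + 1 := by omega
    have h2 : k + j - k = j := by omega
    rw [h1, h2, Finset.prod_range_succ]
  have hDnz : ∀ j : ℕ, k + j + 1 ≤ ℓ →
      ((ℓ : ℂ) + 1 - 2 * p - 2 * (k : ℂ) - ((j : ℂ) + 1)) ≠ 0 := by
    intro j hj
    have h := hden (j + 1) (by omega) (by omega)
    push_cast at h
    exact h
  have hjnz : ∀ j : ℕ, ((j : ℂ) + 1) ≠ 0 := fun j => Nat.cast_add_one_ne_zero j
  have hcoef : ∀ i : ℕ, 1 ≤ i → i ≤ ℓ → (4 * (i : ℂ) * ((ℓ : ℂ) + 1 - (i : ℂ))) ≠ 0 := by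
    intro i h1 h2
    have hi : (i : ℂ) ≠ 0 := Nat.cast_ne_zero.mpr (by omega)
    have h3 : (ℓ : ℂ) + 1 - (i : ℂ) ≠ 0 := by
      intro h
      have h' : (ℓ : ℂ) + 1 = (i : ℂ) := sub_eq_zero.mp h
      have h'' : ((ℓ + 1 : ℕ) : ℂ) = ((i : ℕ) : ℂ) := by push_cast; exact h'
      have : ℓ + 1 = i := Nat.cast_injective h''
      omega
    exact mul_ne_zero (mul_ne_zero (by norm_num : (4:ℂ) ≠ 0) hi) h3
  constructor
  · intro x hx
    have hz : ∀ d : ℕ, d < k → x (k - 1 - d) = 0 := by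
      intro d
      induction d with
      | zero =>
        intro hd
        have heq := hx k hd hk
        rw [sub_self, zero_mul] at heq
        have hc := hcoef k hd hk
        simpa using (mul_eq_zero.mp heq).resolve_left hc
      | succ d ih =>
        intro hd
        have hxi := ih (by omega)
        have h1 : 1 ≤ k - 1 - d := by omega
        have h2 : k - 1 - d ≤ ℓ := by omega
        have heq := hx (k - 1 - d) h1 h2
        rw [hxi, mul_zero] at heq
        have hc := hcoef (k - 1 - d) h1 h2
        have h3 : k - 1 - d - 1 = k - 1 - (d + 1) := by omega
        rw [h3] at heq
        exact (mul_eq_zero.mp heq).resolve_left hc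
    have hxz : ∀ i, i < k → x i = 0 := by
      intro i hi
      have h := hz (k - 1 - i) (by omega)
      rwa [show k - 1 - (k - 1 - i) = i from by omega] at h
    refine ⟨hxz, ?_⟩
    have hup : ∀ j : ℕ, k + j ≤ ℓ → x (k + j) = x k * v (k + j) := by
      intro j
      induction j with
      | zero => intro _; simp [hvk]
      | succ j ih =>
        intro hj
        have hxj := ih (by omega)
        have heq := hx (k + j + 1) (by omega) (by omega)
        rw [key (k + j + 1)] at heq
        rw [show k + j + 1 - 1 = k + j from by omega, hxj] at heq
        push_cast at heq
        show x (k + j + 1) = x k * v (k + j + 1)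
        rw [hvstep j]
        have hD := hDnz j hj
        have hJ := hjnz j
        rw [mul_div, mul_div, eq_div_iff (mul_ne_zero hJ hD)]
        linear_combination (-(1/4) : ℂ) * heq
    intro i hi
    rcases Nat.lt_or_ge i k with hik | hik
    · rw [hxz i hik, hvlt i hik, mul_zero]
    · obtain ⟨j, rfl⟩ : ∃ j, i = k + j := ⟨i - k, by omega⟩
      exact hup j hi
  · intro i h1 h2
    rcases Nat.lt_trichotomy i k with hik | hik | hik
    · rw [hvlt i hik, hvlt (i - 1) (by omega), mul_zero, mul_zero]
    · subst hik
      rw [hvlt (i - 1) (by omega), sub_self, zero_mul, mul_zero]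
    · obtain ⟨j, rfl⟩ : ∃ j, i = k + j + 1 := ⟨i - k - 1, by omega⟩
      rw [key, hvstep j, show k + j + 1 - 1 = k + j from by omega]
      have hD := hDnz j h2
      have hJ := hjnz j
      push_cast
      rw [mul_div, mul_div, eq_div_iff (mul_ne_zero hJ hD)]
      ring
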